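/- Let Λ be an m×n real matrix, R a p×n real matrix, S a q×m real matrix and Q a k×n real matrix. Fix ε > 0, η > 0, y ∈ ℝᵐ, and let c, d ≥ 0 be such that c RᵀR + d Λᵀ Sᵀ S Λ − QᵀQ is positive semidefinite. If f₀ ∈ ℝⁿ satisfies c RᵀR f₀ + d Λᵀ Sᵀ S (Λ f₀ − y) = 0, then for every f ∈ ℝⁿ with ‖R f‖ ≤ ε and ‖S (y − Λ f)‖ ≤ η, one has ‖Q f − Q f₀‖² ≤ c (ε² − ‖R f₀‖²) + d (η² − ‖S (y − Λ f₀)‖²). -/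

import Mathlib

open Matrix

/-- Euclidean norm on `Fin k → ℝ`. -/
noncomputable def eNorm {k : ℕ} (x : Fin k → ℝ) : ℝ := Real.sqrt (∑ i, x i ^ 2)

lemma eNorm_sq {N : ℕ} (x : Fin N → ℝ) : eNorm x ^ 2 = x ⬝ᵥ x := by
  rw [eNorm, Real.sq_sqrt (by positivity)]
  simp [dotProduct, sq]

lemma key_dot {N n : ℕ} (A : Matrix (Fin N) (Fin n) ℝ) (x : Fin n → ℝ) (w : Fin N → ℝ) :
    x ⬝ᵥ (Aᵀ *ᵥ w) = (A *ᵥ x) ⬝ᵥ w := by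
  rw [dotProduct_mulVec, vecMul_transpose]

theorem pointwise_S_procedure_bound {m n p q k : ℕ}
    (Λ : Matrix (Fin m) (Fin n) ℝ) (R : Matrix (Fin p) (Fin n) ℝ)
    (S : Matrix (Fin q) (Fin m) ℝ) (Q : Matrix (Fin k) (Fin n) ℝ)
    (ε η : ℝ) (hε : 0 < ε) (hη : 0 < η) (y : Fin m → ℝ)
    (c d : ℝ) (hc : 0 ≤ c) (hd : 0 ≤ d)
    (hfeas : (c • (Rᵀ * R) + d • (Λᵀ * Sᵀ * S * Λ) - Qᵀ * Q).PosSemidef)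
    (f₀ : Fin n → ℝ)
    (hf₀ : c • ((Rᵀ * R) *ᵥ f₀) + d • ((Λᵀ * Sᵀ * S) *ᵥ (Λ *ᵥ f₀ - y)) = 0) :
    ∀ f : Fin n → ℝ, eNorm (R *ᵥ f) ≤ ε → eNorm (S *ᵥ (y - Λ *ᵥ f)) ≤ η →
      eNorm (Q *ᵥ f - Q *ᵥ f₀) ^ 2 ≤
        c * (ε ^ 2 - eNorm (R *ᵥ f₀) ^ 2) +
          d * (η ^ 2 - eNorm (S *ᵥ (y - Λ *ᵥ f₀)) ^ 2) := by
  intro f hRf hSf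
  set g : Fin n → ℝ := f - f₀ with hg
  set a : Fin p → ℝ := R *ᵥ f₀ with ha
  set b : Fin p → ℝ := R *ᵥ f with hb
  set u : Fin q → ℝ := S *ᵥ (y - Λ *ᵥ f₀) with hu
  set v : Fin q → ℝ := S *ᵥ (y - Λ *ᵥ f) with hv
  have hRg : R *ᵥ g = b - a := by rw [hg, mulVec_sub]
  have hSg : (S * Λ) *ᵥ g = u - v := by
    rw [hg, ← mulVec_mulVec, mulVec_sub, mulVec_sub, hu, hv, mulVec_sub, mulVec_sub]
    abel
  have hSneg : S *ᵥ (Λ *ᵥ f₀ - y) = -u := by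
    rw [hu, mulVec_sub, mulVec_sub]; abel
  have h2 : Λᵀ * Sᵀ * S * Λ = (S * Λ)ᵀ * (S * Λ) := by
    simp [transpose_mul, Matrix.mul_assoc]
  have h3 : Λᵀ * Sᵀ * S = (S * Λ)ᵀ * S := by simp [transpose_mul]
  -- PSD fact
  have hA := hfeas.dotProduct_mulVec_nonneg g
  have hA' : 0 ≤ c * ((b - a) ⬝ᵥ (b - a)) + d * ((u - v) ⬝ᵥ (u - v))
      - (Q *ᵥ g) ⬝ᵥ (Q *ᵥ g) := by
    have e : (star g) ⬝ᵥ ((c • (Rᵀ * R) + d • (Λᵀ * Sᵀ * S * Λ) - Qᵀ * Q) *ᵥ g) =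
        c * ((b - a) ⬝ᵥ (b - a)) + d * ((u - v) ⬝ᵥ (u - v))
        - (Q *ᵥ g) ⬝ᵥ (Q *ᵥ g) := by
      simp only [star_trivial, sub_mulVec, add_mulVec, smul_mulVec, h2,
        ← mulVec_mulVec, dotProduct_sub, dotProduct_add, dotProduct_smul,
        smul_eq_mul, key_dot, hRg, hSg]
    rw [e] at hA; exact hA
  -- stationarity dotted with g
  have hB : c * ((b - a) ⬝ᵥ a) - d * ((u - v) ⬝ᵥ u) = 0 := by
    have h := congrArg (fun w => g ⬝ᵥ w) hf₀
    simp only [dotProduct_add, dotProduct_smul, smul_eq_mul, dotProduct_zero] at h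
    rw [show (Λᵀ * Sᵀ * S : Matrix (Fin n) (Fin m) ℝ) *ᵥ (Λ *ᵥ f₀ - y)
          = (S * Λ)ᵀ *ᵥ (S *ᵥ (Λ *ᵥ f₀ - y)) by rw [h3, ← mulVec_mulVec],
      ← mulVec_mulVec, key_dot, key_dot, hRg, hSg, hSneg, ← ha] at h
    rw [show (u - v) ⬝ᵥ u = -((u - v) ⬝ᵥ -u) by simp]
    linarith
  -- norm facts
  have hbb : b ⬝ᵥ b ≤ ε ^ 2 := by
    rw [← eNorm_sq]
    exact pow_le_pow_left₀ (Real.sqrt_nonneg _) hRf 2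
  have hvv : v ⬝ᵥ v ≤ η ^ 2 := by
    rw [← eNorm_sq]
    exact pow_le_pow_left₀ (Real.sqrt_nonneg _) hSf 2
  have hgoal : Q *ᵥ f - Q *ᵥ f₀ = Q *ᵥ g := by rw [hg, mulVec_sub]
  rw [hgoal, eNorm_sq, eNorm_sq, eNorm_sq]
  have cab : a ⬝ᵥ b = b ⬝ᵥ a := dotProduct_comm _ _
  have cuv : u ⬝ᵥ v = v ⬝ᵥ u := dotProduct_comm _ _
  simp only [dotProduct_sub, sub_dotProduct] at hA' hB ⊢
  nlinarith [mul_le_mul_of_nonneg_left hbb hc, mul_le_mul_of_nonneg_left hvv hd]
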